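/- For Gaussian distributions N(θ₀, Σ₀) and N(θ₁, Σ₁) restricted to a subset A (with Σ_{i,A} the principal submatrices and common means θ₀ = θ₁), the Bhattacharyya distance B(A) = ½ log det(Σ_A) − ¼(log det(Σ₀,A) + log det(Σ₁,A)), with Σ_A = ½(Σ₀,A + Σ₁,A), is a difference g(A) − h(A) of two submodular set functions, where g(A) = ½ log det(½(Σ₀,A + Σ₁,A)) and h(A) = ¼(log det(Σ₀,A) + log det(Σ₁,A)); moreover B(A) ≥ 0 for all A. -/

import Mathlib

open Matrix

/-- A set function on a finite ground set is submodular (diminishing returns). -/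
def IsSubmodular {V : Type*} [DecidableEq V] (f : Finset V → ℝ) : Prop :=
  ∀ A B : Finset V, A ⊆ B → ∀ v ∉ B, f (insert v B) - f B ≤ f (insert v A) - f A

/-- Log-determinant of the principal submatrix indexed by `A`. -/
noncomputable def ldSub {n : ℕ} (M : Matrix (Fin n) (Fin n) ℝ) (A : Finset (Fin n)) : ℝ :=
  Real.log (M.submatrix (Subtype.val : {x // x ∈ A} → Fin n) Subtype.val).det

/-- Bhattacharyya distance restricted to subset `A` (common-means Gaussian case). -/
noncomputable def bhattB {n : ℕ} (S0 S1 : Matrix (Fin n) (Fin n) ℝ) (A : Finset (Fin n)) : ℝ :=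
  (1 / 2) * ldSub ((1 / 2 : ℝ) • (S0 + S1)) A - (1 / 4) * (ldSub S0 A + ldSub S1 A)

set_option linter.unusedSectionVars false
set_option linter.unusedVariables false
set_option maxHeartbeats 1000000

section Ext

variable {m n : Type*} [Fintype m] [Fintype n] [DecidableEq n]

/-- Extension of a vector along an injective index map, by zero. -/
noncomputable def extVec (e : m → n) (x : m → ℝ) : n → ℝ :=
  fun j => ∑ i, if e i = j then x i else 0

lemma extVec_apply {e : m → n} (he : Function.Injective e) (x : m → ℝ) (i : m) :
    extVec e x (e i) = x i := by
  rw [extVec, Finset.sum_eq_single i]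
  · simp
  · intro b _ hb; rw [if_neg (fun h => hb (he h))]
  · simp

lemma extVec_eq_zero {e : m → n} (x : m → ℝ) {j : n} (hj : ∀ i, e i ≠ j) :
    extVec e x j = 0 := by
  rw [extVec, Finset.sum_eq_zero]
  intro i _
  rw [if_neg (hj i)]

lemma quad_ext (M : Matrix n n ℝ) {e : m → n} (he : Function.Injective e) (x : m → ℝ) :
    x ⬝ᵥ ((M.submatrix e e) *ᵥ x) = extVec e x ⬝ᵥ (M *ᵥ extVec e x) := by
  set y : n → ℝ := extVec e x with hy
  have expand : ∀ j, (∑ k, M j k * y k) = ∑ i', M j (e i') * x i' := by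
    intro j
    simp only [hy, extVec, Finset.mul_sum, mul_ite, mul_zero]
    rw [Finset.sum_comm]
    simp [Finset.sum_ite_eq]
  simp only [dotProduct, mulVec, submatrix_apply]
  rw [Finset.sum_congr rfl (fun j (_ : j ∈ Finset.univ) => by rw [expand j] :
    ∀ j ∈ Finset.univ, y j * (∑ k, M j k * y k) = y j * ∑ i', M j (e i') * x i')]
  simp only [hy, extVec, Finset.sum_mul, ite_mul, zero_mul]
  rw [Finset.sum_comm]
  simp [Finset.sum_ite_eq]

lemma posDef_submatrix_inj {M : Matrix n n ℝ} (hM : M.PosDef) {e : m → n}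
    (he : Function.Injective e) : (M.submatrix e e).PosDef := by
  refine PosDef.of_dotProduct_mulVec_pos (hM.1.submatrix e) (fun x hx => ?_)
  have hyne : extVec e x ≠ 0 := by
    intro h
    apply hx
    funext i
    have := congrFun h (e i)
    simpa [extVec_apply he] using this
  have : star x = x := by funext i; simp
  rw [this, quad_ext M he x]
  have := hM.dotProduct_mulVec_pos hyne
  have hst : star (extVec e x) = extVec e x := by funext i; simp
  rwa [hst] at this

lemma quad_restrict (M : Matrix n n ℝ) {e : m → n} (he : Function.Injective e)
    (z : n → ℝ) (hz : ∀ j, z j ≠ 0 → ∃ i, e i = j) :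
    z ⬝ᵥ (M *ᵥ z) = (z ∘ e) ⬝ᵥ ((M.submatrix e e) *ᵥ (z ∘ e)) := by
  rw [quad_ext M he]
  have : extVec e (z ∘ e) = z := by
    funext j
    by_cases h : ∃ i, e i = j
    · obtain ⟨i, rfl⟩ := h
      rw [extVec_apply he]; rfl
    · push_neg at h
      rw [extVec_eq_zero _ h]
      by_contra hzj
      exact absurd (hz j (Ne.symm hzj)) (by push_neg; exact h)
  rw [this]

end Ext

section Schur

variable {ι : Type*} [Fintype ι] [DecidableEq ι]

/-- The principal submatrix indexed by a finset. -/
noncomputable def subM (M : Matrix ι ι ℝ) (A : Finset ι) :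
    Matrix {x // x ∈ A} {x // x ∈ A} ℝ :=
  M.submatrix Subtype.val Subtype.val

/-- The row of entries `M v i`, `i ∈ A`, as a `Unit × A` matrix. -/
noncomputable def rowB (M : Matrix ι ι ℝ) (A : Finset ι) (v : ι) :
    Matrix Unit {x // x ∈ A} ℝ :=
  of fun _ i => M v i.val

/-- The scalar Schur complement of the block `A` inside `insert v A`. -/
noncomputable def scS (M : Matrix ι ι ℝ) (A : Finset ι) (v : ι) : ℝ :=
  (((of fun _ _ => M v v) : Matrix Unit Unit ℝ)
    - rowB M A v * (subM M A)⁻¹ * (rowB M A v)ᴴ) () ()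

variable {M : Matrix ι ι ℝ} {A : Finset ι} {v : ι}

lemma subM_posDef (M : Matrix ι ι ℝ) (hM : M.PosDef) (A : Finset ι) : (subM M A).PosDef :=
  posDef_submatrix_inj hM Subtype.val_injective

lemma Msymm (hM : M.PosDef) (i j : ι) : M i j = M j i := by
  have := congrFun (congrFun hM.1 j) i
  rw [conjTranspose_apply] at this
  simpa using this

/-- The equivalence between `Unit ⊕ A` and `insert v A`. -/
noncomputable def insertEquiv (A : Finset ι) (v : ι) (hv : v ∉ A) :
    Unit ⊕ {x // x ∈ A} ≃ {x // x ∈ insert v A} where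
  toFun := Sum.elim (fun _ => ⟨v, Finset.mem_insert_self v A⟩)
    (fun i => ⟨i.val, Finset.mem_insert_of_mem i.2⟩)
  invFun := fun j => if h : (j : ι) ∈ A then Sum.inr ⟨j, h⟩ else Sum.inl ()
  left_inv := by
    rintro (u | i)
    · simp [hv]
    · simp [i.2]
  right_inv := fun j => by
    by_cases h : (j : ι) ∈ A
    · simp [h]
    · have hjv : (j : ι) = v := by
        rcases Finset.mem_insert.mp j.2 with h' | h'
        · exact h'
        · exact absurd h' h
      simp only [dif_neg h, Sum.elim_inl]
      exact Subtype.ext hjv.symm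

lemma submatrix_insertEquiv (hM : M.PosDef) (hv : v ∉ A) :
    (subM M (insert v A)).submatrix (insertEquiv A v hv) (insertEquiv A v hv) =
      fromBlocks (of fun _ _ => M v v) (rowB M A v) (rowB M A v)ᴴ (subM M A) := by
  ext s t
  cases s <;> cases t <;>
    simp [subM, insertEquiv, rowB, fromBlocks, conjTranspose_apply, Msymm hM]

lemma det_insert (hM : M.PosDef) (hv : v ∉ A) :
    (subM M (insert v A)).det = (subM M A).det * scS M A v := by
  have hD : (subM M A).PosDef := subM_posDef M hM A
  haveI : Invertible (subM M A) :=
    (subM M A).invertibleOfIsUnitDet (isUnit_iff_ne_zero.mpr hD.det_pos.ne')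
  rw [← det_submatrix_equiv_self (insertEquiv A v hv) (subM M (insert v A)),
    submatrix_insertEquiv hM hv,
    det_fromBlocks₂₂, invOf_eq_nonsing_inv]
  congr 1
  rw [det_unique]
  rfl

end Schur

section Quad

variable {ι : Type*} [Fintype ι] [DecidableEq ι] {M : Matrix ι ι ℝ} {A : Finset ι} {v : ι}

lemma star_id_real {κ : Type*} (w : κ → ℝ) : star w = w :=
  funext fun _ => by simp

lemma unit_quad (S : Matrix Unit Unit ℝ) :
    (fun _ => (1:ℝ)) ᵥ* S ⬝ᵥ (fun _ => 1) = S () () := by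
  simp [vecMul, dotProduct]

lemma subM_submatrix (hv : v ∉ A) :
    (subM M (insert v A)).submatrix (insertEquiv A v hv) (insertEquiv A v hv) =
      M.submatrix (fun s => ((insertEquiv A v hv s : {x // x ∈ insert v A}) : ι))
        (fun s => ((insertEquiv A v hv s : {x // x ∈ insert v A}) : ι)) := by
  ext s t
  simp [subM, submatrix_apply]

lemma f_injective (hv : v ∉ A) :
    Function.Injective (fun s => ((insertEquiv A v hv s : {x // x ∈ insert v A}) : ι)) :=
  Subtype.val_injective.comp (insertEquiv A v hv).injective

lemma scS_le_quad (hM : M.PosDef) (hv : v ∉ A) (z : ι → ℝ) (hzv : z v = 1)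
    (hsupp : ∀ j, z j ≠ 0 → j ∈ insert v A) :
    scS M A v ≤ z ⬝ᵥ (M *ᵥ z) := by
  classical
  have hD : (subM M A).PosDef := subM_posDef M hM A
  haveI : Invertible (subM M A) :=
    (subM M A).invertibleOfIsUnitDet (isUnit_iff_ne_zero.mpr hD.det_pos.ne')
  set g := insertEquiv A v hv with hg
  set f : Unit ⊕ {x // x ∈ A} → ι := fun s => ((g s : {x // x ∈ insert v A}) : ι) with hf
  have hrange : ∀ j, z j ≠ 0 → ∃ s, f s = j := by
    intro j hj
    rcases Finset.mem_insert.mp (hsupp j hj) with h | h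
    · exact ⟨Sum.inl (), h.symm⟩
    · exact ⟨Sum.inr ⟨j, h⟩, rfl⟩
  have h1 : z ⬝ᵥ (M *ᵥ z) = (z ∘ f) ⬝ᵥ ((M.submatrix f f) *ᵥ (z ∘ f)) :=
    quad_restrict M (f_injective hv) z hrange
  have h2 : M.submatrix f f =
      fromBlocks (of fun _ _ => M v v) (rowB M A v) (rowB M A v)ᴴ (subM M A) := by
    rw [← subM_submatrix hv, submatrix_insertEquiv hM hv]
  have h3 : z ∘ f = Sum.elim (fun _ => (1:ℝ)) (fun i => z i.val) := by
    funext s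
    rcases s with u | i
    · simpa [hf, hg, insertEquiv] using hzv
    · rfl
  set y : {x // x ∈ A} → ℝ := fun i => z i.val with hy
  have h4 := schur_complement_eq₂₂ (α := ℝ) (of fun _ _ => M v v) (rowB M A v)
    (fun _ => (1:ℝ)) y hD.1
  simp only [star_id_real] at h4
  rw [h1, h2, h3, dotProduct_mulVec, h4, unit_quad]
  have h6 : scS M A v =
      (((of fun _ _ => M v v) : Matrix Unit Unit ℝ) - rowB M A v * (subM M A)⁻¹ *
        (rowB M A v)ᴴ) () () := rfl
  rw [← h6]
  have h7 : 0 ≤ (((subM M A)⁻¹ * (rowB M A v)ᴴ) *ᵥ (fun _ => (1:ℝ)) + y) ᵥ*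
      (subM M A) ⬝ᵥ (((subM M A)⁻¹ * (rowB M A v)ᴴ) *ᵥ (fun _ => (1:ℝ)) + y) := by
    rw [← dotProduct_mulVec]
    have := hD.posSemidef.dotProduct_mulVec_nonneg (((subM M A)⁻¹ * (rowB M A v)ᴴ) *ᵥ (fun _ => (1:ℝ)) + y)
    rwa [star_id_real] at this
  linarith

lemma exists_min_quad (hM : M.PosDef) (hv : v ∉ A) :
    ∃ z : ι → ℝ, z v = 1 ∧ (∀ j, z j ≠ 0 → j ∈ insert v A) ∧
      z ⬝ᵥ (M *ᵥ z) = scS M A v := by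
  classical
  have hD : (subM M A).PosDef := subM_posDef M hM A
  haveI : Invertible (subM M A) :=
    (subM M A).invertibleOfIsUnitDet (isUnit_iff_ne_zero.mpr hD.det_pos.ne')
  set g := insertEquiv A v hv with hg
  set f : Unit ⊕ {x // x ∈ A} → ι := fun s => ((g s : {x // x ∈ insert v A}) : ι) with hf
  set y : {x // x ∈ A} → ℝ :=
    -(((subM M A)⁻¹ * (rowB M A v)ᴴ) *ᵥ (fun _ => (1:ℝ))) with hy
  set z : ι → ℝ := fun j => if h : j ∈ A then y ⟨j, h⟩ else if j = v then 1 else 0 with hz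
  have hzv : z v = 1 := by simp [hz, hv]
  have hsupp : ∀ j, z j ≠ 0 → j ∈ insert v A := by
    intro j hj
    by_cases h : j ∈ A
    · exact Finset.mem_insert_of_mem h
    · by_cases h' : j = v
      · exact Finset.mem_insert.mpr (Or.inl h')
      · exfalso; apply hj; simp [hz, h, h']
  refine ⟨z, hzv, hsupp, ?_⟩
  have hrange : ∀ j, z j ≠ 0 → ∃ s, f s = j := by
    intro j hj
    rcases Finset.mem_insert.mp (hsupp j hj) with h | h
    · exact ⟨Sum.inl (), h.symm⟩
    · exact ⟨Sum.inr ⟨j, h⟩, rfl⟩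
  have h1 : z ⬝ᵥ (M *ᵥ z) = (z ∘ f) ⬝ᵥ ((M.submatrix f f) *ᵥ (z ∘ f)) :=
    quad_restrict M (f_injective hv) z hrange
  have h2 : M.submatrix f f =
      fromBlocks (of fun _ _ => M v v) (rowB M A v) (rowB M A v)ᴴ (subM M A) := by
    rw [← subM_submatrix hv, submatrix_insertEquiv hM hv]
  have h3 : z ∘ f = Sum.elim (fun _ => (1:ℝ)) y := by
    funext s
    rcases s with u | i
    · simpa [hf, hg, insertEquiv] using hzv
    · simp only [Function.comp_apply, Sum.elim_inr]
      have : f (Sum.inr i) = i.val := rfl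
      rw [this, hz]
      simp [i.2]
  have h4 := schur_complement_eq₂₂ (α := ℝ) (of fun _ _ => M v v) (rowB M A v)
    (fun _ => (1:ℝ)) y hD.1
  simp only [star_id_real] at h4
  rw [h1, h2, h3, dotProduct_mulVec, h4]
  have hzero : ((subM M A)⁻¹ * (rowB M A v)ᴴ) *ᵥ (fun _ => (1:ℝ)) + y = 0 := by
    rw [hy]; exact add_neg_cancel _
  rw [hzero, unit_quad]
  simp [scS]

lemma scS_pos (hM : M.PosDef) (hv : v ∉ A) : 0 < scS M A v := by
  have h1 := (subM_posDef M hM (insert v A)).det_pos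
  have h2 := (subM_posDef M hM A).det_pos
  rw [det_insert hM hv] at h1
  nlinarith

lemma scS_mono (hM : M.PosDef) {B : Finset ι} (hAB : A ⊆ B) (hvB : v ∉ B) :
    scS M B v ≤ scS M A v := by
  have hvA : v ∉ A := fun h => hvB (hAB h)
  obtain ⟨z, hzv, hsupp, hquad⟩ := exists_min_quad hM hvA
  rw [← hquad]
  exact scS_le_quad hM hvB z hzv
    (fun j hj => Finset.insert_subset_insert v hAB (hsupp j hj))

lemma logdet_submodular (hM : M.PosDef) :
    IsSubmodular (fun A : Finset ι => Real.log (subM M A).det) := by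
  intro A B hAB v hvB
  have hvA : v ∉ A := fun h => hvB (hAB h)
  dsimp only
  have hdA := (subM_posDef M hM A).det_pos
  have hdB := (subM_posDef M hM B).det_pos
  rw [det_insert hM hvA, det_insert hM hvB,
    Real.log_mul hdA.ne' (scS_pos hM hvA).ne',
    Real.log_mul hdB.ne' (scS_pos hM hvB).ne']
  have := Real.log_le_log (scS_pos hM hvB) (scS_mono hM hAB hvB)
  linarith

end Quad

section Concave

variable {α : Type*} [Fintype α] [DecidableEq α]

lemma posDef_conj_inv {R Y : Matrix α α ℝ} (hR : R.IsHermitian) (hRdet : R.det ≠ 0)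
    (hY : Y.PosDef) : (R⁻¹ * Y * R⁻¹).PosDef := by
  have hRinv : (R⁻¹).IsHermitian := hR.inv
  refine PosDef.of_dotProduct_mulVec_pos ?_ ?_
  · have : R⁻¹ * Y * R⁻¹ = (R⁻¹)ᴴ * Y * R⁻¹ := by rw [hRinv.eq]
    rw [this]
    exact isHermitian_conjTranspose_mul_mul _ hY.1
  · intro x hx
    have hxR : R⁻¹ *ᵥ x ≠ 0 := by
      intro h
      apply hx
      have := congrArg (fun w => R *ᵥ w) h
      simpa [mulVec_mulVec, Matrix.mul_nonsing_inv R (isUnit_iff_ne_zero.mpr hRdet)] using this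
    have key : star x ⬝ᵥ ((R⁻¹ * Y * R⁻¹) *ᵥ x)
        = star (R⁻¹ *ᵥ x) ⬝ᵥ (Y *ᵥ (R⁻¹ *ᵥ x)) := by
      rw [star_id_real, star_id_real, ← mulVec_mulVec, ← mulVec_mulVec,
        dotProduct_mulVec x, ← mulVec_transpose]
      have : (R⁻¹)ᵀ = R⁻¹ := by
        rw [← conjTranspose_eq_transpose_of_trivial]; exact hRinv
      rw [this]
    rw [key]
    exact hY.dotProduct_mulVec_pos hxR

lemma det_one_add_hermitian {M : Matrix α α ℝ} (hM : M.IsHermitian) :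
    (1 + M).det = ∏ i, (1 + hM.eigenvalues i) := by
  set U := (hM.eigenvectorUnitary : Matrix α α ℝ) with hU
  have hUU : U * star U = 1 := (Matrix.mem_unitaryGroup_iff).mp hM.eigenvectorUnitary.2
  have hspec := hM.spectral_theorem
  rw [Unitary.conjStarAlgAut_apply] at hspec
  have h1 : 1 + M = U * (1 + diagonal (RCLike.ofReal ∘ hM.eigenvalues)) * star U := by
    rw [Matrix.mul_add, Matrix.add_mul, Matrix.mul_one, hUU, ← hspec]
  rw [h1, det_mul, det_mul]
  have hdet : det U * det (star U) = 1 := by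
    rw [mul_comm, ← det_mul, (Matrix.mem_unitaryGroup_iff').mp hM.eigenvectorUnitary.2]
    exact det_one
  have : (1 : Matrix α α ℝ) + diagonal (RCLike.ofReal ∘ hM.eigenvalues)
      = diagonal (fun i => 1 + hM.eigenvalues i) := by
    rw [← diagonal_one, diagonal_add]
    congr 1
  rw [mul_comm (det U), mul_assoc, hdet, mul_one, this, det_diagonal]

lemma det_eq_prod_eigenvalues_real {M : Matrix α α ℝ} (hM : M.IsHermitian) :
    M.det = ∏ i, hM.eigenvalues i := by
  have := hM.det_eq_prod_eigenvalues
  simpa [RCLike.ofReal] using this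

open scoped MatrixOrder in
/-- Log-concavity of the determinant: `½(log det X + log det Y) ≤ log det(½(X+Y))`. -/
lemma half_logdet_add {X Y : Matrix α α ℝ} (hX : X.PosDef) (hY : Y.PosDef) :
    (1/2 : ℝ) * (Real.log X.det + Real.log Y.det) ≤
      Real.log (((1/2 : ℝ) • (X + Y)).det) := by
  classical
  set R := CFC.sqrt X with hRdef
  have hRps : R.PosSemidef := Matrix.nonneg_iff_posSemidef.mp (CFC.sqrt_nonneg X)
  have hRH : R.IsHermitian := hRps.1
  have hRsq : R * R = X := CFC.sqrt_mul_sqrt_self X (Matrix.nonneg_iff_posSemidef.mpr hX.posSemidef)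
  have hdetR_nonneg : 0 ≤ R.det := by
    rw [det_eq_prod_eigenvalues_real hRH]
    exact Finset.prod_nonneg fun i _ => hRps.eigenvalues_nonneg i
  have hdetRR : R.det * R.det = X.det := by rw [← det_mul, hRsq]
  have hdetR_pos : 0 < R.det := by
    rcases lt_or_eq_of_le hdetR_nonneg with h | h
    · exact h
    · exfalso; have := hX.det_pos; rw [← hdetRR, ← h] at this; simp at this
  have hRdet_ne : R.det ≠ 0 := hdetR_pos.ne'
  set M := R⁻¹ * Y * R⁻¹ with hMdef
  have hMpd : M.PosDef := posDef_conj_inv hRH hRdet_ne hY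
  have hMH : M.IsHermitian := hMpd.1
  set μ := hMH.eigenvalues with hmu
  have hμpos : ∀ i, 0 < μ i := fun i => hMpd.eigenvalues_pos i
  have hXY : X + Y = R * (1 + M) * R := by
    have h1 : R * (1 + M) * R = R * R + R * M * R := by
      rw [Matrix.mul_add, Matrix.mul_one, Matrix.add_mul]
    have h2 : R * M * R = Y := by
      rw [hMdef, ← Matrix.mul_assoc, ← Matrix.mul_assoc,
        Matrix.mul_nonsing_inv R (isUnit_iff_ne_zero.mpr hRdet_ne), Matrix.one_mul, Matrix.mul_assoc,
        Matrix.nonsing_inv_mul R (isUnit_iff_ne_zero.mpr hRdet_ne), Matrix.mul_one]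
    rw [h1, h2, hRsq]
  have hdetXY : (X + Y).det = X.det * ∏ i, (1 + μ i) := by
    rw [hXY, det_mul, det_mul, det_one_add_hermitian hMH, ← hdetRR]
    ring
  have hdetM : M.det = Y.det / X.det := by
    have hRinvdet : (R⁻¹).det = R.det⁻¹ := by rw [det_nonsing_inv, Ring.inverse_eq_inv']
    rw [hMdef, det_mul, det_mul, hRinvdet, ← hdetRR]
    field_simp
  have hprod : ∏ i, ((1 + μ i)/2) = (∏ i, (1 + μ i)) * (1/2:ℝ)^(Fintype.card α) := by
    rw [← Finset.card_univ, ← Finset.prod_const, ← Finset.prod_mul_distrib]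
    exact Finset.prod_congr rfl fun i _ => by ring
  have hdet_half : (((1/2 : ℝ) • (X + Y)).det) = X.det * ∏ i, ((1 + μ i)/2) := by
    rw [det_smul, hdetXY, hprod, ← Finset.card_univ]
    ring
  have hMdet_pos : 0 < M.det := hMpd.det_pos
  have hlogM : Real.log M.det = ∑ i, Real.log (μ i) := by
    rw [det_eq_prod_eigenvalues_real hMH, Real.log_prod (fun i _ => (hμpos i).ne')]
  have hY' : Y.det = M.det * X.det := by
    rw [hdetM, div_mul_cancel₀ _ hX.det_pos.ne']
  have hlogY : Real.log Y.det = Real.log X.det + ∑ i, Real.log (μ i) := by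
    rw [hY', Real.log_mul hMdet_pos.ne' hX.det_pos.ne', hlogM]
    ring
  have hlog_half : Real.log (((1/2 : ℝ) • (X + Y)).det)
      = Real.log X.det + ∑ i, Real.log ((1 + μ i)/2) := by
    rw [hdet_half, Real.log_mul hX.det_pos.ne'
        (Finset.prod_pos (fun i _ => by have := hμpos i; positivity)).ne',
      Real.log_prod (fun i _ => by have := hμpos i; positivity)]
  have hpt : ∀ i, Real.log (μ i) / 2 ≤ Real.log ((1 + μ i)/2) := by
    intro i
    rw [← Real.log_sqrt (hμpos i).le]
    apply Real.log_le_log (Real.sqrt_pos.mpr (hμpos i))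
    nlinarith [Real.sq_sqrt (hμpos i).le, Real.sqrt_nonneg (μ i), sq_nonneg (Real.sqrt (μ i) - 1)]
  have hsum : (∑ i, Real.log (μ i)) / 2 ≤ ∑ i, Real.log ((1 + μ i)/2) := by
    rw [Finset.sum_div]
    exact Finset.sum_le_sum fun i _ => hpt i
  rw [hlog_half, hlogY]
  linarith

end Concave

section Assemble

lemma posDef_smul_real {ι : Type*} [Fintype ι] [DecidableEq ι] {c : ℝ} (hc : 0 < c)
    {M : Matrix ι ι ℝ} (hM : M.PosDef) : (c • M).PosDef := by
  refine PosDef.of_dotProduct_mulVec_pos ?_ ?_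
  · unfold Matrix.IsHermitian
    rw [conjTranspose_smul, hM.1.eq]
    simp
  · intro x hx
    have h := hM.dotProduct_mulVec_pos hx
    rw [smul_mulVec, dotProduct_smul]
    exact mul_pos hc h

lemma IsSubmodular.smulC {V : Type*} [DecidableEq V] {f : Finset V → ℝ}
    (hf : IsSubmodular f) {c : ℝ} (hc : 0 ≤ c) : IsSubmodular fun A => c * f A := by
  intro A B hAB v hv
  have := hf A B hAB v hv
  dsimp only
  nlinarith

lemma IsSubmodular.addF {V : Type*} [DecidableEq V] {f g : Finset V → ℝ}
    (hf : IsSubmodular f) (hg : IsSubmodular g) : IsSubmodular fun A => f A + g A := by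
  intro A B hAB v hv
  have h1 := hf A B hAB v hv
  have h2 := hg A B hAB v hv
  dsimp only
  linarith

lemma ldSub_eq {n : ℕ} (M : Matrix (Fin n) (Fin n) ℝ) (A : Finset (Fin n)) :
    ldSub M A = Real.log (subM M A).det := rfl


theorem bhattacharyya_DS_decomposition {n : ℕ} (S0 S1 : Matrix (Fin n) (Fin n) ℝ)
    (h0 : S0.PosDef) (h1 : S1.PosDef) :
    IsSubmodular (fun A : Finset (Fin n) => (1 / 2) * ldSub ((1 / 2 : ℝ) • (S0 + S1)) A) ∧
    IsSubmodular (fun A : Finset (Fin n) => (1 / 4) * (ldSub S0 A + ldSub S1 A)) ∧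
    (∀ A : Finset (Fin n),
      bhattB S0 S1 A =
        (1 / 2) * ldSub ((1 / 2 : ℝ) • (S0 + S1)) A - (1 / 4) * (ldSub S0 A + ldSub S1 A)) ∧
    (∀ A : Finset (Fin n), 0 ≤ bhattB S0 S1 A) := by
  have hmix : ((1 / 2 : ℝ) • (S0 + S1)).PosDef :=
    posDef_smul_real (by norm_num) (h0.add h1)
  refine ⟨?_, ?_, fun A => rfl, ?_⟩
  · exact (logdet_submodular hmix).smulC (by norm_num)
  · exact ((logdet_submodular h0).addF (logdet_submodular h1)).smulC (by norm_num)
  · intro A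
    have hX : (subM S0 A).PosDef := subM_posDef S0 h0 A
    have hY : (subM S1 A).PosDef := subM_posDef S1 h1 A
    have hsub : subM ((1 / 2 : ℝ) • (S0 + S1)) A
        = (1 / 2 : ℝ) • (subM S0 A + subM S1 A) := by
      ext i j
      simp [subM, submatrix_apply]
      ring
    have hkey := half_logdet_add hX hY
    rw [← hsub] at hkey
    rw [bhattB, ldSub_eq, ldSub_eq, ldSub_eq]
    linarith
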